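/- arXiv:1209.4766 — 2 statements merged into one kernel-verified Lean document; each statement's English description precedes it below -/
import Mathlib

section
/- Let ψ_n ∈ 𝓥, n ∈ ℕ, let ψ ∈ L^∞(E, ν), and assume that ψ_n ρ s-converges to ψρ for every ρ ∈ 𝓒. If φ_n ∈ 𝓒 s-converges to φ ∈ L²(E, ν), then φ_n ψ_n s-converges to φψ. -/
open MeasureTheory Filter Topology

noncomputable section

namespace Mosco

variable {E : Type*} [MeasurableSpace E]

/-- The inner product of two real-valued functions with respect to a measure,
`⟨φ, ψ⟩ = ∫ φ ψ dμ`. -/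
def ip (μ : Measure E) (φ ψ : E → ℝ) : ℝ := ∫ x, φ x * ψ x ∂μ

/-- The framework of Section 2.1: mutually singular probability measures `ν n`, `n : ℕ`
(`ν 0` playing the role of the limit measure `ν`), such that `L²(E, ν 0)` is separable,
together with disjoint sets `En n` carrying `ν n`, and a linear subset `F = 𝓕 ⊆ 𝓓`
which is dense in `L²(E, ν 0)`. -/
structure Frame (E : Type*) [MeasurableSpace E] where
  ν : ℕ → Measure E
  prob : ∀ n, IsProbabilityMeasure (ν n)
  singular : ∀ m n, m ≠ n → (ν m).MutuallySingular (ν n)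
  separableL2 : TopologicalSpace.SeparableSpace (Lp ℝ 2 (ν 0))
  En : ℕ → Set E
  measEn : ∀ n, MeasurableSet (En n)
  disjEn : ∀ m n, m ≠ n → Disjoint (En m) (En n)
  nullEn : ∀ n, ν n (En n)ᶜ = 0
  F : Set (E → ℝ)
  F_measurable : ∀ φ ∈ F, Measurable φ
  F_memL2 : ∀ φ ∈ F, ∀ n, MemLp φ 2 (ν n)
  F_tendsto : ∀ φ ∈ F, Tendsto (fun n => ip (ν n) φ φ) atTop (𝓝 (ip (ν 0) φ φ))
  F_linear : ∀ φ ∈ F, ∀ ψ ∈ F, ∀ a b : ℝ, (fun x => a * φ x + b * ψ x) ∈ F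
  F_dense : ∀ f : E → ℝ, Measurable f → MemLp f 2 (ν 0) → ∀ ε : ℝ, 0 < ε →
    ∃ φ ∈ F, ip (ν 0) (fun x => f x - φ x) (fun x => f x - φ x) < ε

/-- The set `𝓓`: everywhere defined measurable functions lying in every `L²(E, ν n)`
whose `ν n`-norms converge to the `ν 0`-norm. -/
def Frame.D (fr : Frame E) : Set (E → ℝ) :=
  {φ | Measurable φ ∧ (∀ n, MemLp φ 2 (fr.ν n)) ∧
    Tendsto (fun n => ip (fr.ν n) φ φ) atTop (𝓝 (ip (fr.ν 0) φ φ))}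

/-- The set `𝓒`: elements of `𝓓` satisfying conditions (c1) and (c2). -/
def Frame.C (fr : Frame E) : Set (E → ℝ) :=
  {φ | φ ∈ fr.D ∧ (∀ n, 1 ≤ n → ∃ g ∈ fr.F, φ =ᵐ[fr.ν n] g) ∧
    ∀ ψ ∈ fr.F, Tendsto (fun n => ip (fr.ν n) φ ψ) atTop (𝓝 (ip (fr.ν 0) φ ψ))}

/-- The set `𝓥` of multipliers mapping `𝓓` into `𝓓` and `𝓕` into `𝓕`. -/
def Frame.V (fr : Frame E) : Set (E → ℝ) :=
  {ψ | Measurable ψ ∧ (∀ n, MemLp ψ 2 (fr.ν n)) ∧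
    (∀ σ ∈ fr.D, (fun x => σ x * ψ x) ∈ fr.D) ∧
    (∀ τ ∈ fr.F, (fun x => τ x * ψ x) ∈ fr.F)}

/-- `w`-convergence of a sequence `φs` (with `φs n` regarded as an element of
`L²(E, ν n)`) to `φ ∈ L²(E, ν 0)`. -/
def Frame.WConv (fr : Frame E) (φs : ℕ → E → ℝ) (φ : E → ℝ) : Prop :=
  ∀ ψ ∈ fr.C, Tendsto (fun n => ip (fr.ν n) (φs n) ψ) atTop (𝓝 (ip (fr.ν 0) φ ψ))

/-- `s`-convergence: `w`-convergence together with convergence of the norms. -/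
def Frame.SConv (fr : Frame E) (φs : ℕ → E → ℝ) (φ : E → ℝ) : Prop :=
  fr.WConv φs φ ∧
  Tendsto (fun n => ip (fr.ν n) (φs n) (φs n)) atTop (𝓝 (ip (fr.ν 0) φ φ))


theorem ip_congr_ae {μ : Measure E} {f f' g g' : E → ℝ} (hf : f =ᵐ[μ] f') (hg : g =ᵐ[μ] g') :
    ip μ f g = ip μ f' g' :=
  integral_congr_ae (hf.mul hg)

theorem integrable_mul_of_memL2 {μ : Measure E} {f g : E → ℝ}
    (hfm : Measurable f) (hgm : Measurable g) (hf : MemLp f 2 μ) (hg : MemLp g 2 μ) :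
    Integrable (fun x => f x * g x) μ := by
  refine Integrable.mono' ((hf.integrable_sq.add hg.integrable_sq).div_const 2)
    (hfm.mul hgm).aestronglyMeasurable ?_
  filter_upwards with x
  have h1 : |f x * g x| ≤ (f x ^ 2 + g x ^ 2) / 2 := by
    rw [abs_mul]
    nlinarith [sq_abs (f x), sq_abs (g x), sq_nonneg (|f x| - |g x|), abs_nonneg (f x),
      abs_nonneg (g x)]
  calc ‖f x * g x‖ = |f x * g x| := rfl
    _ ≤ (f x ^ 2 + g x ^ 2) / 2 := h1

theorem ip_expand (μ : Measure E) {τ σ : E → ℝ}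
    (hτm : Measurable τ) (hσm : Measurable σ) (hτ : MemLp τ 2 μ) (hσ : MemLp σ 2 μ) :
    ip μ (fun x => 1 * τ x + 1 * σ x) (fun x => 1 * τ x + 1 * σ x)
      = ip μ τ τ + 2 * ip μ τ σ + ip μ σ σ := by
  have hττ := integrable_mul_of_memL2 hτm hτm hτ hτ
  have hτσ := integrable_mul_of_memL2 hτm hσm hτ hσ
  have hσσ := integrable_mul_of_memL2 hσm hσm hσ hσ
  unfold ip
  have : ∀ x, (1 * τ x + 1 * σ x) * (1 * τ x + 1 * σ x)
      = τ x * τ x + (2 * (τ x * σ x) + σ x * σ x) := fun x => by ring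
  rw [show (fun x => (1 * τ x + 1 * σ x) * (1 * τ x + 1 * σ x))
      = fun x => τ x * τ x + (2 * (τ x * σ x) + σ x * σ x) from funext this]
  have h1 : Integrable (fun x => 2 * (τ x * σ x)) μ := hτσ.const_mul 2
  have h2 : Integrable (fun x => 2 * (τ x * σ x) + σ x * σ x) μ := h1.add hσσ
  rw [integral_add hττ h2]
  rw [integral_add h1 hσσ, integral_const_mul]
  ring

theorem Frame.F_subset_C (fr : Frame E) : fr.F ⊆ fr.C := by
  intro τ hτ
  refine ⟨⟨fr.F_measurable τ hτ, fr.F_memL2 τ hτ, fr.F_tendsto τ hτ⟩,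
    fun n _ => ⟨τ, hτ, Filter.EventuallyEq.rfl⟩, ?_⟩
  intro σ hσ
  have hsum := fr.F_linear τ hτ σ hσ 1 1
  have hT := fr.F_tendsto _ hsum
  have hτt := fr.F_tendsto τ hτ
  have hσt := fr.F_tendsto σ hσ
  have key : ∀ n, ip (fr.ν n) τ σ =
      (ip (fr.ν n) (fun x => 1 * τ x + 1 * σ x) (fun x => 1 * τ x + 1 * σ x)
        - ip (fr.ν n) τ τ - ip (fr.ν n) σ σ) / 2 := by
    intro n
    rw [ip_expand (fr.ν n) (fr.F_measurable τ hτ) (fr.F_measurable σ hσ)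
      (fr.F_memL2 τ hτ n) (fr.F_memL2 σ hσ n)]
    ring
  have H := ((hT.sub hτt).sub hσt).div_const 2
  rw [show ip (fr.ν 0) τ σ = _ from key 0]
  exact Tendsto.congr (fun n => (key n).symm) H

/-- Proposition 2.3 (g): let `ψs n ∈ 𝓥`, `ψ ∈ L^∞(E, ν)`, and assume `ψs n · ρ`
`s`-converges to `ψ · ρ` for every `ρ ∈ 𝓒`.  If `φs n ∈ 𝓒` `s`-converges to
`φ ∈ L²(E, ν)`, then `φs n · ψs n` `s`-converges to `φ · ψ`. -/
theorem sconv_mul (fr : Frame E) (ψs : ℕ → E → ℝ) (hψs : ∀ n, ψs n ∈ fr.V)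
    (ψ : E → ℝ) (hψm : Measurable ψ) (hψ_inf : MemLp ψ ⊤ (fr.ν 0))
    (hsρ : ∀ ρ ∈ fr.C, fr.SConv (fun n x => ψs n x * ρ x) (fun x => ψ x * ρ x))
    (φs : ℕ → E → ℝ) (hφs : ∀ n, φs n ∈ fr.C)
    (φ : E → ℝ) (hφm : Measurable φ) (hφ2 : MemLp φ 2 (fr.ν 0)) (hs : fr.SConv φs φ) :
    fr.SConv (fun n x => φs n x * ψs n x) (fun x => φ x * ψ x) := by
  classical
  -- choose representatives of `φs n` in `F` with respect to `ν n`
  have hgex : ∀ n : ℕ, ∃ gg : E → ℝ, Measurable gg ∧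
      (1 ≤ n → gg ∈ fr.F ∧ φs n =ᵐ[fr.ν n] gg) := by
    intro n
    rcases Nat.eq_zero_or_pos n with h | h
    · exact ⟨φ, hφm, fun hn => by omega⟩
    · obtain ⟨gg, hgg, hae⟩ := (hφs n).2.1 n h
      exact ⟨gg, fr.F_measurable gg hgg, fun _ => ⟨hgg, hae⟩⟩
  choose g hgm hg using hgex
  -- the index function
  set P : E → Prop := fun x => ∃ m, x ∈ fr.En (m + 1) with hP
  set idx : E → ℕ := fun x => if hx : P x then Nat.find hx + 1 else 0 with hidxdef
  have hidx_eq : ∀ m (x : E), x ∈ fr.En (m + 1) → idx x = m + 1 := by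
    intro m x hx
    have hPx : P x := ⟨m, hx⟩
    have hfind : Nat.find hPx = m := by
      rw [Nat.find_eq_iff]
      refine ⟨hx, fun j hj hxj => ?_⟩
      exact Set.disjoint_left.mp (fr.disjEn (j + 1) (m + 1) (by omega)) hxj hx
    simp only [hidxdef, dif_pos hPx, hfind]
  have hidx0 : ∀ x : E, (∀ m, x ∉ fr.En (m + 1)) → idx x = 0 := by
    intro x hx
    have hPx : ¬ P x := fun ⟨m, hm⟩ => hx m hm
    simp only [hidxdef, dif_neg hPx]
  have hidx_pre0 : idx ⁻¹' {0} = (⋃ m, fr.En (m + 1))ᶜ := by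
    ext x
    simp only [Set.mem_preimage, Set.mem_singleton_iff, Set.mem_compl_iff, Set.mem_iUnion]
    constructor
    · intro h0 ⟨m, hm⟩
      rw [hidx_eq m x hm] at h0
      omega
    · intro h
      exact hidx0 x fun m hm => h ⟨m, hm⟩
  have hidx_pre : ∀ m, idx ⁻¹' {m + 1} = fr.En (m + 1) := by
    intro m
    ext x
    simp only [Set.mem_preimage, Set.mem_singleton_iff]
    constructor
    · intro h
      have hPx : P x := by
        by_contra hPx
        simp only [hidxdef, dif_neg hPx] at h
        omega
      simp only [hidxdef, dif_pos hPx] at h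
      have : Nat.find hPx = m := by omega
      have := Nat.find_spec hPx
      rwa [‹Nat.find hPx = m›] at this
    · exact hidx_eq m x
  -- the gluing function ρ
  set G : ℕ → E → ℝ := fun k => if k = 0 then φ else g k with hGdef
  set ρ : E → ℝ := fun x => G (idx x) x with hρdef
  have hGm : ∀ k, Measurable (G k) := by
    intro k
    rcases Nat.eq_zero_or_pos k with h | h
    · simpa [hGdef, h] using hφm
    · simpa [hGdef, Nat.pos_iff_ne_zero.mp h] using hgm k
  have hρm : Measurable ρ := by
    intro s hs
    have : ρ ⁻¹' s = ⋃ k, idx ⁻¹' {k} ∩ G k ⁻¹' s := by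
      ext x
      simp only [Set.mem_preimage, Set.mem_iUnion, Set.mem_inter_iff, Set.mem_singleton_iff]
      constructor
      · intro h; exact ⟨idx x, rfl, h⟩
      · rintro ⟨k, hk, hks⟩
        show G (idx x) x ∈ s
        rwa [hk]
    rw [this]
    refine MeasurableSet.iUnion fun k => ((?_ : MeasurableSet (idx ⁻¹' {k})).inter
      (hGm k hs))
    rcases Nat.eq_zero_or_pos k with h | h
    · rw [h, hidx_pre0]
      exact (MeasurableSet.iUnion fun m => fr.measEn (m + 1)).compl
    · obtain ⟨m, rfl⟩ := Nat.exists_eq_add_of_le h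
      rw [show 1 + m = m + 1 by omega, hidx_pre m]
      exact fr.measEn (m + 1)
  -- key pointwise identities
  have hρ_on : ∀ n, 1 ≤ n → ∀ x ∈ fr.En n, ρ x = g n x := by
    intro n hn x hx
    obtain ⟨m, rfl⟩ : ∃ m, n = m + 1 := ⟨n - 1, by omega⟩
    rw [hρdef]
    simp only [hidx_eq m x hx, hGdef]
    simp
  have hρ_out : ∀ x, (∀ m, x ∉ fr.En (m + 1)) → ρ x = φ x := by
    intro x hx
    rw [hρdef]
    simp only [hidx0 x hx, hGdef]
    simp
  -- a.e. facts
  have hEn_ae : ∀ n, ∀ᵐ x ∂ fr.ν n, x ∈ fr.En n := by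
    intro n
    rw [MeasureTheory.ae_iff]
    simpa [Set.compl_def] using fr.nullEn n
  have hae_n : ∀ n, 1 ≤ n → ρ =ᵐ[fr.ν n] φs n := by
    intro n hn
    filter_upwards [hEn_ae n, (hg n hn).2] with x hx hgx
    rw [hρ_on n hn x hx, ← hgx]
  have hae_0 : ρ =ᵐ[fr.ν 0] φ := by
    filter_upwards [hEn_ae 0] with x hx
    refine hρ_out x fun m hm => ?_
    exact Set.disjoint_left.mp (fr.disjEn 0 (m + 1) (by omega)) hx hm
  -- ρ belongs to 𝓒
  have hρC : ρ ∈ fr.C := by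
    refine ⟨⟨hρm, ?_, ?_⟩, ?_, ?_⟩
    · intro n
      rcases Nat.eq_zero_or_pos n with h | h
      · rw [h]; exact hφ2.ae_eq hae_0.symm
      · exact ((hφs n).1.2.1 n).ae_eq (hae_n n h).symm
    · have h1 : ∀ᶠ n in atTop, ip (fr.ν n) (φs n) (φs n) = ip (fr.ν n) ρ ρ := by
        filter_upwards [eventually_ge_atTop 1] with n hn
        exact (ip_congr_ae (hae_n n hn) (hae_n n hn)).symm
      have h2 : ip (fr.ν 0) φ φ = ip (fr.ν 0) ρ ρ := (ip_congr_ae hae_0 hae_0).symm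
      rw [← h2]
      exact hs.2.congr' h1
    · intro n hn
      refine ⟨g n, (hg n hn).1, ?_⟩
      filter_upwards [hEn_ae n] with x hx
      exact hρ_on n hn x hx
    · intro τ hτ
      have h1 : ∀ᶠ n in atTop, ip (fr.ν n) (φs n) τ = ip (fr.ν n) ρ τ := by
        filter_upwards [eventually_ge_atTop 1] with n hn
        exact (ip_congr_ae (hae_n n hn) Filter.EventuallyEq.rfl).symm
      have h2 : ip (fr.ν 0) φ τ = ip (fr.ν 0) ρ τ :=
        (ip_congr_ae hae_0 Filter.EventuallyEq.rfl).symm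
      rw [← h2]
      exact (hs.1 τ (fr.F_subset_C hτ)).congr' h1
  -- apply the hypothesis to ρ and rewrite
  have hSρ := hsρ ρ hρC
  constructor
  · intro σ hσ
    have h1 := hSρ.1 σ hσ
    have h2 : ip (fr.ν 0) (fun x => ψ x * ρ x) σ = ip (fr.ν 0) (fun x => φ x * ψ x) σ := by
      refine ip_congr_ae ?_ Filter.EventuallyEq.rfl
      filter_upwards [hae_0] with x hx
      rw [hx]; ring
    rw [h2] at h1
    refine h1.congr' ?_
    filter_upwards [eventually_ge_atTop 1] with n hn
    refine ip_congr_ae ?_ Filter.EventuallyEq.rfl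
    filter_upwards [hae_n n hn] with x hx
    rw [hx]; ring
  · have h1 := hSρ.2
    have hee0 : (fun x => ψ x * ρ x) =ᵐ[fr.ν 0] (fun x => φ x * ψ x) := by
      filter_upwards [hae_0] with x hx
      rw [hx]; ring
    have h2 : ip (fr.ν 0) (fun x => ψ x * ρ x) (fun x => ψ x * ρ x)
        = ip (fr.ν 0) (fun x => φ x * ψ x) (fun x => φ x * ψ x) := ip_congr_ae hee0 hee0
    rw [h2] at h1
    refine h1.congr' ?_
    filter_upwards [eventually_ge_atTop 1] with n hn
    have hee : (fun x => ψs n x * ρ x) =ᵐ[fr.ν n] (fun x => φs n x * ψs n x) := by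
      filter_upwards [hae_n n hn] with x hx
      rw [hx]; ring
    exact ip_congr_ae hee hee

end Mosco
end
end

section
/- Assume the forms S_n pre-converge to S. Let w_n ∈ D(S_n) ∩ 𝓒 w-converge to w ∈ L²(E, ν) with sup_n ⟨A_n w_n, A_n w_n⟩_n < ∞, and let v_n ∈ D(S_n) ∩ 𝓒 s-converge to v ∈ D(S) in the sense of (ii) of pre-convergence (i.e. with sup_n ⟨A_n v_n, A_n v_n⟩_n < ∞ and limsup_n S_n(v_n, v_n) ≤ S(v, v)). Then w ∈ D(S), the limit lim_{n→∞} (S_n(v_n, w_n) + S_n(w_n, v_n)) exists, and it equals S(v, w) + S(w, v). -/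
open MeasureTheory Filter Topology

noncomputable section

namespace Mosco

variable {E : Type*} [MeasurableSpace E]

open Classical

/-- The `L²(μ)`-class of a function (zero if the function is not square-integrable). -/
def toL2 (μ : Measure E) (φ : E → ℝ) : Lp ℝ 2 μ :=
  if h : MemLp φ 2 μ then h.toLp φ else 0

/-- A strongly continuous semigroup of bounded linear operators on `L²(E, μ)`. -/
structure Semigroup2 {E : Type*} [MeasurableSpace E] (μ : Measure E) where
  T : ℝ → Lp ℝ 2 μ →L[ℝ] Lp ℝ 2 μ
  T_zero : T 0 = ContinuousLinearMap.id ℝ (Lp ℝ 2 μ)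
  T_add : ∀ s t : ℝ, 0 ≤ s → 0 ≤ t → T (s + t) = (T s).comp (T t)
  strongCont : ∀ f : Lp ℝ 2 μ, Tendsto (fun t => T t f) (𝓝[≥] (0:ℝ)) (𝓝 f)

namespace Semigroup2

variable {μ : Measure E}

/-- The semigroup is a contraction semigroup. -/
def IsContraction (sg : Semigroup2 μ) : Prop := ∀ t : ℝ, 0 ≤ t → ‖sg.T t‖ ≤ 1

/-- The adjoint (dual) semigroup `T'`. -/
def dual (sg : Semigroup2 μ) (t : ℝ) : Lp ℝ 2 μ →L[ℝ] Lp ℝ 2 μ :=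
  ContinuousLinearMap.adjoint (sg.T t)

/-- Membership in the domain `D(A)` of the generator. -/
def memDom (sg : Semigroup2 μ) (f : Lp ℝ 2 μ) : Prop :=
  ∃ g : Lp ℝ 2 μ, Tendsto (fun t : ℝ => t⁻¹ • (sg.T t f - f)) (𝓝[>] (0:ℝ)) (𝓝 g)

/-- The generator `A` (zero off its domain). -/
def gen (sg : Semigroup2 μ) (f : Lp ℝ 2 μ) : Lp ℝ 2 μ :=
  if h : sg.memDom f then Exists.choose h else 0

/-- Membership in the domain `D(A')` of the adjoint generator. -/
def memDom' (sg : Semigroup2 μ) (f : Lp ℝ 2 μ) : Prop :=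
  ∃ g : Lp ℝ 2 μ, Tendsto (fun t : ℝ => t⁻¹ • (sg.dual t f - f)) (𝓝[>] (0:ℝ)) (𝓝 g)

/-- The adjoint generator `A'` (zero off its domain). -/
def gen' (sg : Semigroup2 μ) (f : Lp ℝ 2 μ) : Lp ℝ 2 μ :=
  if h : sg.memDom' f then Exists.choose h else 0

/-- The resolvent `G_β = (β - A)⁻¹ = ∫_0^∞ e^{-βt} T_t dt`. -/
def res (sg : Semigroup2 μ) (β : ℝ) (f : Lp ℝ 2 μ) : Lp ℝ 2 μ :=
  ∫ t in Set.Ioi (0:ℝ), Real.exp (-β * t) • sg.T t f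

/-- The adjoint resolvent `G'_β`. -/
def res' (sg : Semigroup2 μ) (β : ℝ) (f : Lp ℝ 2 μ) : Lp ℝ 2 μ :=
  ∫ t in Set.Ioi (0:ℝ), Real.exp (-β * t) • sg.dual t f

/-- `u ∈ D(A) = D(S)`, at the level of functions. -/
def memD (sg : Semigroup2 μ) (u : E → ℝ) : Prop := sg.memDom (toL2 μ u)

/-- `u ∈ D(A')`, at the level of functions. -/
def memD' (sg : Semigroup2 μ) (u : E → ℝ) : Prop := sg.memDom' (toL2 μ u)

/-- `A u`, at the level of functions. -/
def Af (sg : Semigroup2 μ) (u : E → ℝ) : E → ℝ := sg.gen (toL2 μ u)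

/-- `A' u`, at the level of functions. -/
def Af' (sg : Semigroup2 μ) (u : E → ℝ) : E → ℝ := sg.gen' (toL2 μ u)

/-- `G_β u`, at the level of functions. -/
def Res (sg : Semigroup2 μ) (β : ℝ) (u : E → ℝ) : E → ℝ := sg.res β (toL2 μ u)

/-- `G'_β u`, at the level of functions. -/
def Res' (sg : Semigroup2 μ) (β : ℝ) (u : E → ℝ) : E → ℝ := sg.res' β (toL2 μ u)

/-- `T_t u`, at the level of functions. -/
def Tf (sg : Semigroup2 μ) (t : ℝ) (u : E → ℝ) : E → ℝ := sg.T t (toL2 μ u)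

/-- `T'_t u`, at the level of functions. -/
def Tf' (sg : Semigroup2 μ) (t : ℝ) (u : E → ℝ) : E → ℝ := sg.dual t (toL2 μ u)

/-- The bilinear form `S(u, v) = ⟨-A u, v⟩` associated with the semigroup. -/
def S (sg : Semigroup2 μ) (u v : E → ℝ) : ℝ := ip μ (fun x => -(sg.Af u x)) v

/-- `S_β(u, v) = β ⟨u, v⟩ + S(u, v)`. -/
def Sb (sg : Semigroup2 μ) (β : ℝ) (u v : E → ℝ) : ℝ := β * ip μ u v + sg.S u v

end Semigroup2

/-- Definition 2.4 (i) and (ii): the forms `S n` pre-converge to `S 0`.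
Here `sg n` is the semigroup on `L²(E, ν n)` and `sg 0` the limiting one. -/
def PreConv (fr : Frame E) (sg : ∀ n, Semigroup2 (fr.ν n)) : Prop :=
  (∀ φ : E → ℝ, Measurable φ → MemLp φ 2 (fr.ν 0) →
    ∀ nk : ℕ → ℕ, StrictMono nk →
    ∀ φk : ℕ → E → ℝ, (∀ k, φk k ∈ fr.C ∧ (sg (nk k)).memD (φk k)) →
    (∀ ψ ∈ fr.C, Tendsto (fun k => ip (fr.ν (nk k)) (φk k) ψ)
      atTop (𝓝 (ip (fr.ν 0) φ ψ))) →
    (∃ M : ℝ, ∀ k, ip (fr.ν (nk k)) ((sg (nk k)).Af (φk k)) ((sg (nk k)).Af (φk k)) ≤ M) →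
    (sg 0).memD φ ∧
      (sg 0).S φ φ ≤ liminf (fun k => (sg (nk k)).S (φk k) (φk k)) atTop) ∧
  (∀ ψ : E → ℝ, Measurable ψ → MemLp ψ 2 (fr.ν 0) → (sg 0).memD ψ →
    ∃ ψs : ℕ → E → ℝ, (∀ n, ψs n ∈ fr.C ∧ (sg n).memD (ψs n)) ∧
      fr.SConv ψs ψ ∧
      (∃ M : ℝ, ∀ n, ip (fr.ν n) ((sg n).Af (ψs n)) ((sg n).Af (ψs n)) ≤ M) ∧
      limsup (fun n => (sg n).S (ψs n) (ψs n)) atTop ≤ (sg 0).S ψ ψ)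

/-- Condition (iii) of Definition 2.4. -/
def CondIII (fr : Frame E) (sg : ∀ n, Semigroup2 (fr.ν n)) : Prop :=
  ∀ β : ℝ, 0 < β →
  ∀ u : E → ℝ, Measurable u → MemLp u 2 (fr.ν 0) → (sg 0).memD u →
  ∀ us : ℕ → E → ℝ,
    (∀ n, us n ∈ fr.C ∧ (sg n).memD (us n) ∧ ∃ c ∈ fr.C, (sg n).Af (us n) =ᵐ[fr.ν n] c) →
    (∃ w : E → ℝ, Measurable w ∧ MemLp w 2 (fr.ν 0) ∧ fr.WConv us w) →
    (∃ M : ℝ, ∀ n, ip (fr.ν n) ((sg n).Af (us n)) ((sg n).Af (us n)) ≤ M) →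
    (∀ ψ ∈ fr.C, ∀ ψs : ℕ → E → ℝ, (∀ n, ψs n ∈ fr.C) → fr.SConv ψs ψ →
      Tendsto (fun n => (sg n).Sb β (us n) (ψs n)) atTop (𝓝 ((sg 0).Sb β u ψ))) →
    ∀ ψ : E → ℝ, Measurable ψ → MemLp ψ 2 (fr.ν 0) → (sg 0).memD ψ →
    ∀ ψs : ℕ → E → ℝ, (∀ n, ψs n ∈ fr.C ∧ (sg n).memD (ψs n)) → fr.SConv ψs ψ →
      (∃ M : ℝ, ∀ n, ip (fr.ν n) ((sg n).Af (ψs n)) ((sg n).Af (ψs n)) ≤ M) →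
      limsup (fun n => (sg n).S (ψs n) (ψs n)) atTop ≤ (sg 0).S ψ ψ →
      Tendsto (fun n => (sg n).Sb β (ψs n) (us n)) atTop (𝓝 ((sg 0).Sb β ψ u))

/-- Condition (iv) of Lemma 2.6. -/
def CondIV (fr : Frame E) (sg : ∀ n, Semigroup2 (fr.ν n)) : Prop :=
  ∀ β : ℝ, 0 < β →
  ∀ u : E → ℝ, Measurable u → MemLp u 2 (fr.ν 0) → (sg 0).memD u →
  ∀ us : ℕ → E → ℝ,
    (∀ n, us n ∈ fr.C ∧ (sg n).memD (us n) ∧ ∃ c ∈ fr.C, (sg n).Af (us n) =ᵐ[fr.ν n] c) →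
    (∃ w : E → ℝ, Measurable w ∧ MemLp w 2 (fr.ν 0) ∧ fr.WConv us w) →
    (∃ M : ℝ, ∀ n, ip (fr.ν n) ((sg n).Af (us n)) ((sg n).Af (us n)) ≤ M) →
    fr.WConv (fun n x => β * us n x - (sg n).Af (us n) x)
      (fun x => β * u x - (sg 0).Af u x) →
    fr.WConv us u

/-- The forms converge: pre-convergence together with condition (iii). -/
def Conv (fr : Frame E) (sg : ∀ n, Semigroup2 (fr.ν n)) : Prop :=
  PreConv fr sg ∧ CondIII fr sg

/-- Condition (c3): resolvents and adjoint resolvents of elements of `𝓒`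
coincide a.e. with elements of `𝓒`. -/
def CondC3 (fr : Frame E) (sg : ∀ n, Semigroup2 (fr.ν n)) : Prop :=
  ∀ g ∈ fr.C, ∀ β : ℝ, 0 < β →
    (∃ u ∈ fr.C, (sg 0).Res β g =ᵐ[fr.ν 0] u) ∧
    (∀ n, 1 ≤ n → ∃ u ∈ fr.C, (sg n).Res β g =ᵐ[fr.ν n] u) ∧
    (∃ u ∈ fr.C, (sg 0).Res' β g =ᵐ[fr.ν 0] u) ∧
    (∀ n, 1 ≤ n → ∃ u ∈ fr.C, (sg n).Res' β g =ᵐ[fr.ν n] u)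

/-- Condition (c4): `D(S) ⊆ 𝓒` and `A(D(S)) ⊆ 𝓒`, up to `ν 0`-a.e. equality. -/
def CondC4 (fr : Frame E) (sg : ∀ n, Semigroup2 (fr.ν n)) : Prop :=
  ∀ φ : E → ℝ, Measurable φ → MemLp φ 2 (fr.ν 0) → (sg 0).memD φ →
    (∃ u ∈ fr.C, φ =ᵐ[fr.ν 0] u) ∧ (∃ u ∈ fr.C, (sg 0).Af φ =ᵐ[fr.ν 0] u)

/-- Condition (c5): semigroups and adjoint semigroups applied to elements of `𝓒`
coincide a.e. with elements of `𝓒`. -/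
def CondC5 (fr : Frame E) (sg : ∀ n, Semigroup2 (fr.ν n)) : Prop :=
  ∀ g ∈ fr.C, ∀ t : ℝ, 0 ≤ t →
    (∃ u ∈ fr.C, (sg 0).Tf t g =ᵐ[fr.ν 0] u) ∧
    (∀ n, 1 ≤ n → ∃ u ∈ fr.C, (sg n).Tf t g =ᵐ[fr.ν n] u) ∧
    (∃ u ∈ fr.C, (sg 0).Tf' t g =ᵐ[fr.ν 0] u) ∧
    (∀ n, 1 ≤ n → ∃ u ∈ fr.C, (sg n).Tf' t g =ᵐ[fr.ν n] u)

/-! ### Auxiliary bridge lemmas -/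

section Bridges

variable {μ : Measure E} {φ ψ χ : E → ℝ}

lemma integrable_mul2 (hφ : MemLp φ 2 μ) (hψ : MemLp ψ 2 μ) :
    Integrable (fun x => φ x * ψ x) μ := by
  have h := MeasureTheory.L2.integrable_inner (𝕜 := ℝ) (hφ.toLp φ) (hψ.toLp ψ)
  refine h.congr ?_
  filter_upwards [hφ.coeFn_toLp, hψ.coeFn_toLp] with x h1 h2
  simp [h1, h2, RCLike.inner_apply, conj_trivial, mul_comm]

lemma ip_congr_left (h : φ =ᵐ[μ] ψ) : ip μ φ χ = ip μ ψ χ := by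
  refine integral_congr_ae ?_
  filter_upwards [h] with x hx; rw [hx]

lemma ip_congr_right (h : ψ =ᵐ[μ] χ) : ip μ φ ψ = ip μ φ χ := by
  refine integral_congr_ae ?_
  filter_upwards [h] with x hx; rw [hx]

lemma ip_comm (μ : Measure E) (φ ψ : E → ℝ) : ip μ φ ψ = ip μ ψ φ := by
  unfold ip; simp_rw [mul_comm]

lemma ip_self_nonneg (μ : Measure E) (φ : E → ℝ) : 0 ≤ ip μ φ φ :=
  integral_nonneg fun x => mul_self_nonneg _

lemma ip_zero_right (μ : Measure E) (φ : E → ℝ) : ip μ φ (fun _ => 0) = 0 := by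
  simp [ip]

lemma ip_eq_inner (hφ : MemLp φ 2 μ) (hψ : MemLp ψ 2 μ) :
    ip μ φ ψ = inner (𝕜 := ℝ) (toL2 μ φ) (toL2 μ ψ) := by
  rw [toL2, dif_pos hφ, toL2, dif_pos hψ, MeasureTheory.L2.inner_def]
  refine integral_congr_ae ?_
  filter_upwards [hφ.coeFn_toLp, hψ.coeFn_toLp] with x h1 h2
  simp [h1, h2, RCLike.inner_apply, conj_trivial, mul_comm]

lemma toL2_coeFn (f : Lp ℝ 2 μ) : toL2 μ (f : E → ℝ) = f := by
  rw [toL2, dif_pos (Lp.memLp f)]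
  exact Lp.toLp_coeFn f _

lemma ip_coe_left (f : Lp ℝ 2 μ) (hψ : MemLp ψ 2 μ) :
    ip μ (f : E → ℝ) ψ = inner (𝕜 := ℝ) f (toL2 μ ψ) := by
  rw [ip_eq_inner (Lp.memLp f) hψ, toL2_coeFn]

lemma ip_coe_coe (f g : Lp ℝ 2 μ) :
    ip μ (f : E → ℝ) (g : E → ℝ) = inner (𝕜 := ℝ) f g := by
  rw [ip_eq_inner (Lp.memLp f) (Lp.memLp g), toL2_coeFn, toL2_coeFn]

lemma ip_self_eq_norm_sq (hφ : MemLp φ 2 μ) : ip μ φ φ = ‖toL2 μ φ‖ ^ 2 := by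
  rw [ip_eq_inner hφ hφ, real_inner_self_eq_norm_sq]

lemma norm_toL2_eq_sqrt (hφ : MemLp φ 2 μ) : ‖toL2 μ φ‖ = Real.sqrt (ip μ φ φ) := by
  rw [ip_self_eq_norm_sq hφ, Real.sqrt_sq (norm_nonneg _)]

lemma abs_ip_le (hφ : MemLp φ 2 μ) (hψ : MemLp ψ 2 μ) :
    |ip μ φ ψ| ≤ Real.sqrt (ip μ φ φ) * Real.sqrt (ip μ ψ ψ) := by
  rw [ip_eq_inner hφ hψ, ← norm_toL2_eq_sqrt hφ, ← norm_toL2_eq_sqrt hψ]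
  exact abs_real_inner_le_norm _ _

lemma ip_add_left (hφ : MemLp φ 2 μ) (hχ : MemLp χ 2 μ) (hψ : MemLp ψ 2 μ) :
    ip μ (fun x => φ x + χ x) ψ = ip μ φ ψ + ip μ χ ψ := by
  unfold ip
  rw [← integral_add (integrable_mul2 hφ hψ) (integrable_mul2 hχ hψ)]
  congr 1; funext x; ring

lemma ip_const_mul_left (c : ℝ) :
    ip μ (fun x => c * φ x) ψ = c * ip μ φ ψ := by
  unfold ip
  rw [← integral_const_mul]
  congr 1; funext x; ring

lemma ip_combo_left (c : ℝ) (hφ : MemLp φ 2 μ) (hχ : MemLp χ 2 μ) (hψ : MemLp ψ 2 μ) :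
    ip μ (fun x => φ x + c * χ x) ψ = ip μ φ ψ + c * ip μ χ ψ := by
  rw [ip_add_left hφ (hχ.const_mul c) hψ, ip_const_mul_left]

lemma ip_sub_right {μ : Measure E} {φ χ ψ : E → ℝ} (hφ : MemLp φ 2 μ) (hχ : MemLp χ 2 μ)
    (hψ : MemLp ψ 2 μ) :
    ip μ φ (fun x => χ x - ψ x) = ip μ φ χ - ip μ φ ψ := by
  have h : (fun x => χ x - ψ x) = fun x => χ x + (-1) * ψ x := by funext x; ring
  rw [h, ip_comm μ φ, ip_add_left hχ (hψ.const_mul (-1)) hφ, ip_const_mul_left,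
    ip_comm μ χ φ, ip_comm μ ψ φ]
  ring

lemma memℒp_combo (c : ℝ) (hφ : MemLp φ 2 μ) (hχ : MemLp χ 2 μ) :
    MemLp (fun x => φ x + c * χ x) 2 μ :=
  hφ.add (hχ.const_mul c)

lemma toL2_combo (c : ℝ) (hφ : MemLp φ 2 μ) (hχ : MemLp χ 2 μ) :
    toL2 μ (fun x => φ x + c * χ x) = toL2 μ φ + c • toL2 μ χ := by
  rw [toL2, dif_pos (memℒp_combo c hφ hχ), toL2, dif_pos hφ, toL2, dif_pos hχ]
  refine Lp.ext ?_
  filter_upwards [(memℒp_combo c hφ hχ).coeFn_toLp, hφ.coeFn_toLp, hχ.coeFn_toLp,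
    Lp.coeFn_add (hφ.toLp φ) (c • hχ.toLp χ), Lp.coeFn_smul c (hχ.toLp χ)]
    with x h0 h1 h2 h3 h4
  rw [h0, h3, Pi.add_apply, h4, Pi.smul_apply, h1, h2, smul_eq_mul]

end Bridges
/-! ### Semigroup generator lemmas -/

namespace Semigroup2

variable {μ : Measure E} {sg : Semigroup2 μ}

lemma tendsto_gen {f : Lp ℝ 2 μ} (h : sg.memDom f) :
    Tendsto (fun t : ℝ => t⁻¹ • (sg.T t f - f)) (𝓝[>] (0:ℝ)) (𝓝 (sg.gen f)) := by
  rw [gen, dif_pos h]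
  exact h.choose_spec

lemma memDom_combo {f g : Lp ℝ 2 μ} (hf : sg.memDom f) (hg : sg.memDom g) (c : ℝ) :
    sg.memDom (f + c • g) := by
  refine ⟨sg.gen f + c • sg.gen g, ?_⟩
  have h : (fun t : ℝ => t⁻¹ • (sg.T t (f + c • g) - (f + c • g)))
      = fun t : ℝ => t⁻¹ • (sg.T t f - f) + c • (t⁻¹ • (sg.T t g - g)) := by
    funext t
    rw [map_add, (sg.T t).map_smul]
    module
  rw [h]
  exact (tendsto_gen hf).add ((tendsto_gen hg).const_smul c)

lemma gen_combo {f g : Lp ℝ 2 μ} (hf : sg.memDom f) (hg : sg.memDom g) (c : ℝ) :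
    sg.gen (f + c • g) = sg.gen f + c • sg.gen g := by
  have h : (fun t : ℝ => t⁻¹ • (sg.T t (f + c • g) - (f + c • g)))
      = fun t : ℝ => t⁻¹ • (sg.T t f - f) + c • (t⁻¹ • (sg.T t g - g)) := by
    funext t
    rw [map_add, (sg.T t).map_smul]
    module
  have h2 : Tendsto (fun t : ℝ => t⁻¹ • (sg.T t (f + c • g) - (f + c • g))) (𝓝[>] (0:ℝ))
      (𝓝 (sg.gen f + c • sg.gen g)) := by
    rw [h]
    exact (tendsto_gen hf).add ((tendsto_gen hg).const_smul c)
  exact tendsto_nhds_unique (tendsto_gen (memDom_combo hf hg c)) h2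

lemma norm_T_apply_le (hc : sg.IsContraction) {t : ℝ} (ht : 0 ≤ t) (f : Lp ℝ 2 μ) :
    ‖sg.T t f‖ ≤ ‖f‖ :=
  le_trans ((sg.T t).le_opNorm f)
    (mul_le_of_le_one_left (norm_nonneg f) (hc t ht))

lemma inner_gen_self_nonpos (hc : sg.IsContraction) {f : Lp ℝ 2 μ} (h : sg.memDom f) :
    inner (𝕜 := ℝ) (sg.gen f) f ≤ 0 := by
  have h1 : Tendsto (fun t : ℝ => inner (𝕜 := ℝ) (t⁻¹ • (sg.T t f - f)) f) (𝓝[>] (0:ℝ))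
      (𝓝 (inner (𝕜 := ℝ) (sg.gen f) f)) :=
    (tendsto_gen h).inner tendsto_const_nhds
  refine le_of_tendsto h1 ?_
  filter_upwards [self_mem_nhdsWithin] with t ht
  have ht' : (0:ℝ) < t := ht
  rw [real_inner_smul_left, inner_sub_left, real_inner_self_eq_norm_sq]
  have h2 : inner (𝕜 := ℝ) (sg.T t f) f ≤ ‖f‖ ^ 2 := by
    calc inner (𝕜 := ℝ) (sg.T t f) f ≤ ‖sg.T t f‖ * ‖f‖ := real_inner_le_norm _ _
    _ ≤ ‖f‖ * ‖f‖ := by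
        have := norm_T_apply_le hc ht'.le f
        exact mul_le_mul_of_nonneg_right this (norm_nonneg f)
    _ = ‖f‖ ^ 2 := by ring
  have h3 : inner (𝕜 := ℝ) (sg.T t f) f - ‖f‖ ^ 2 ≤ 0 := by linarith
  exact mul_nonpos_of_nonneg_of_nonpos (inv_nonneg.2 ht'.le) h3

variable {u v : E → ℝ}

lemma S_eq_inner (hv : MemLp v 2 μ) :
    sg.S u v = -(inner (𝕜 := ℝ) (sg.gen (toL2 μ u)) (toL2 μ v)) := by
  unfold S Af
  have h : (fun x => -((sg.gen (toL2 μ u) : E → ℝ) x))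
      =ᵐ[μ] ((-(sg.gen (toL2 μ u)) : Lp ℝ 2 μ) : E → ℝ) := by
    filter_upwards [Lp.coeFn_neg (sg.gen (toL2 μ u))] with x hx
    rw [hx, Pi.neg_apply]
  rw [ip_congr_left h, ip_coe_left _ hv, inner_neg_left]

lemma S_nonneg (hc : sg.IsContraction) (hu : sg.memD u) (hu2 : MemLp u 2 μ) :
    0 ≤ sg.S u u := by
  rw [S_eq_inner hu2, neg_nonneg]
  exact inner_gen_self_nonpos hc hu

lemma memD_combo (hu : sg.memD u) (hv : sg.memD v) (hu2 : MemLp u 2 μ) (hv2 : MemLp v 2 μ)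
    (c : ℝ) : sg.memD (fun x => u x + c * v x) := by
  unfold memD
  rw [toL2_combo c hu2 hv2]
  exact memDom_combo hu hv c

lemma S_combo_expand (hu : sg.memD u) (hv : sg.memD v) (hu2 : MemLp u 2 μ)
    (hv2 : MemLp v 2 μ) (c : ℝ) :
    sg.S (fun x => u x + c * v x) (fun x => u x + c * v x)
      = sg.S u u + c * (sg.S v u + sg.S u v) + c ^ 2 * sg.S v v := by
  rw [S_eq_inner (memℒp_combo c hu2 hv2), S_eq_inner (u := u) hu2, S_eq_inner (u := u) hv2,
    S_eq_inner (u := v) hu2, S_eq_inner (u := v) hv2, toL2_combo c hu2 hv2, gen_combo hu hv c,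
    inner_add_left, inner_add_right, inner_add_right, real_inner_smul_left,
    real_inner_smul_left, real_inner_smul_right, real_inner_smul_right]
  ring

lemma abs_S_le (hv2 : MemLp v 2 μ) :
    |sg.S u v| ≤ ‖sg.gen (toL2 μ u)‖ * ‖toL2 μ v‖ := by
  rw [S_eq_inner hv2, abs_neg]
  exact abs_real_inner_le_norm _ _

lemma ip_Af_self (sg : Semigroup2 μ) (u : E → ℝ) :
    ip μ (sg.Af u) (sg.Af u) = ‖sg.gen (toL2 μ u)‖ ^ 2 := by
  unfold Af
  rw [ip_coe_coe, real_inner_self_eq_norm_sq]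

end Semigroup2
/-! ### Sequence boundedness helpers -/

lemma bdd_of_eventually (u : ℕ → ℝ) (B : ℝ) (h : ∀ᶠ n in atTop, u n ≤ B) :
    ∃ C, ∀ n, u n ≤ C := by
  obtain ⟨N, hN⟩ := eventually_atTop.1 h
  refine ⟨max B (∑ i ∈ Finset.range N, |u i|), fun n => ?_⟩
  rcases le_or_gt N n with h1 | h1
  · exact le_max_of_le_left (hN n h1)
  · refine le_max_of_le_right ?_
    calc u n ≤ |u n| := le_abs_self _
    _ ≤ ∑ i ∈ Finset.range N, |u i| :=
        Finset.single_le_sum (f := fun i => |u i|) (fun i _ => abs_nonneg _)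
          (Finset.mem_range.2 h1)

lemma bdd_of_tendsto (u : ℕ → ℝ) (L : ℝ) (h : Tendsto u atTop (𝓝 L)) :
    ∃ C, ∀ n, u n ≤ C :=
  bdd_of_eventually u (L + 1) (h.eventually_le_const (by linarith))

lemma ip_combo_both {μ : Measure E} {φ χ : E → ℝ} (c : ℝ) (hφ : MemLp φ 2 μ)
    (hχ : MemLp χ 2 μ) :
    ip μ (fun x => φ x + c * χ x) (fun x => φ x + c * χ x)
      = ip μ φ φ + c * (ip μ χ φ + ip μ φ χ) + c ^ 2 * ip μ χ χ := by
  rw [ip_combo_left c hφ hχ (memℒp_combo c hφ hχ), ip_comm μ φ, ip_comm μ χ,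
    ip_combo_left c hφ hχ hφ, ip_combo_left c hφ hχ hχ, ip_comm μ φ χ]
  ring

namespace Frame

variable (fr : Frame E)

lemma F_nonempty : ∃ φ, φ ∈ fr.F := by
  obtain ⟨φ, hφ, -⟩ := fr.F_dense (fun _ => 0) measurable_const
    (by simpa using (MemLp.zero (μ := fr.ν 0) (p := 2))) 1 one_pos
  exact ⟨φ, hφ⟩

lemma zero_mem_F : (fun _ : E => (0:ℝ)) ∈ fr.F := by
  obtain ⟨φ, hφ⟩ := fr.F_nonempty
  have := fr.F_linear φ hφ φ hφ 0 0
  simpa using this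

lemma smul_mem_F {φ : E → ℝ} (hφ : φ ∈ fr.F) (c : ℝ) : (fun x => c * φ x) ∈ fr.F := by
  have := fr.F_linear φ hφ φ hφ c 0
  simpa using this

lemma combo_mem_F {φ ψ : E → ℝ} (hφ : φ ∈ fr.F) (hψ : ψ ∈ fr.F) (c : ℝ) :
    (fun x => φ x + c * ψ x) ∈ fr.F := by
  have := fr.F_linear φ hφ ψ hψ 1 c
  simpa using this

lemma C_memℒp {φ : E → ℝ} (hφ : φ ∈ fr.C) (n : ℕ) : MemLp φ 2 (fr.ν n) := hφ.1.2.1 n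

lemma C_cross {φ χ : E → ℝ} (hφ : φ ∈ fr.C) (hχ : χ ∈ fr.C) :
    Tendsto (fun m => ip (fr.ν m) φ χ) atTop (𝓝 (ip (fr.ν 0) φ χ)) := by
  refine Metric.tendsto_atTop.mpr fun ε hε => ?_
  obtain ⟨⟨hφm, hφL, hφT⟩, hφ1, hφ2⟩ := hφ
  obtain ⟨⟨hχm, hχL, hχT⟩, hχ1, hχ2⟩ := hχ
  obtain ⟨Cφ, hCφ⟩ := bdd_of_tendsto _ _ hφT
  have hCφ0 : 0 ≤ Cφ := le_trans (ip_self_nonneg _ _) (hCφ 0)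
  set K : ℝ := Real.sqrt Cφ + Real.sqrt (ip (fr.ν 0) φ φ) + 1 with hK
  have hK0 : 0 < K := by
    have := Real.sqrt_nonneg Cφ
    have := Real.sqrt_nonneg (ip (fr.ν 0) φ φ)
    linarith
  set ρ : ℝ := (ε / (4 * K)) ^ 2 with hρ
  have hρ0 : 0 < ρ := by positivity
  obtain ⟨ψ, hψF, hψρ⟩ := fr.F_dense χ hχm (hχL 0) ρ hρ0
  -- d m := ‖χ - ψ‖²  in L²(ν m)
  set d : ℕ → ℝ := fun m => ip (fr.ν m) (fun x => χ x - ψ x) (fun x => χ x - ψ x) with hd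
  have hsub : (fun x => χ x - ψ x) = fun x => χ x + (-1) * ψ x := by funext x; ring
  have hdm : ∀ m, d m = ip (fr.ν m) χ χ + (-1) * (ip (fr.ν m) ψ χ + ip (fr.ν m) χ ψ)
      + (-1) ^ 2 * ip (fr.ν m) ψ ψ := by
    intro m
    rw [hd]
    simp only [hsub]
    exact ip_combo_both (-1) (hχL m) (fr.F_memL2 ψ hψF m)
  have hdT : Tendsto d atTop (𝓝 (d 0)) := by
    simp only [funext hdm, hdm 0]
    refine Tendsto.add (Tendsto.add hχT ?_) ?_
    · refine (Tendsto.add ?_ (hχ2 ψ hψF)).const_mul _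
      have := hχ2 ψ hψF
      simpa only [ip_comm (fr.ν _) ψ χ] using this
    · exact ((fr.F_tendsto ψ hψF).const_mul _)
  have hd0 : d 0 < ρ := hψρ
  have hev1 : ∀ᶠ m in atTop, d m < ρ := hdT.eventually_lt_const hd0
  have hev2 : ∀ᶠ m in atTop, |ip (fr.ν m) φ ψ - ip (fr.ν 0) φ ψ| < ε / 4 := by
    have := (hφ2 ψ hψF)
    rw [Metric.tendsto_atTop] at this
    obtain ⟨N, hN⟩ := this (ε / 4) (by linarith)
    exact eventually_atTop.2 ⟨N, fun m hm => hN m hm⟩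
  have hd_nonneg : ∀ m, 0 ≤ d m := fun m => ip_self_nonneg _ _
  obtain ⟨N, hN⟩ := eventually_atTop.1 (hev1.and hev2)
  refine ⟨N, fun m hm => ?_⟩
  obtain ⟨h1, h2⟩ := hN m hm
  have hsq : Real.sqrt ρ = ε / (4 * K) := by
    rw [hρ, Real.sqrt_sq (by positivity)]
  have hCm : Real.sqrt (ip (fr.ν m) φ φ) ≤ Real.sqrt Cφ := Real.sqrt_le_sqrt (hCφ m)
  have hterm1 : |ip (fr.ν m) φ χ - ip (fr.ν m) φ ψ| ≤ ε / 4 := by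
    rw [← ip_sub_right (hφL m) (hχL m) (fr.F_memL2 ψ hψF m)]
    calc |ip (fr.ν m) φ (fun x => χ x - ψ x)|
        ≤ Real.sqrt (ip (fr.ν m) φ φ) * Real.sqrt (d m) :=
          abs_ip_le (hφL m) ((hχL m).sub (fr.F_memL2 ψ hψF m))
      _ ≤ Real.sqrt Cφ * Real.sqrt ρ := by
          refine mul_le_mul hCm (Real.sqrt_le_sqrt h1.le) (Real.sqrt_nonneg _)
            (Real.sqrt_nonneg _)
      _ ≤ K * (ε / (4 * K)) := by
          rw [hsq]
          refine mul_le_mul_of_nonneg_right ?_ (by positivity)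
          have := Real.sqrt_nonneg (ip (fr.ν 0) φ φ)
          rw [hK]; linarith
      _ = ε / 4 := by field_simp
  have hterm3 : |ip (fr.ν 0) φ ψ - ip (fr.ν 0) φ χ| ≤ ε / 4 := by
    rw [abs_sub_comm, ← ip_sub_right (hφL 0) (hχL 0) (fr.F_memL2 ψ hψF 0)]
    calc |ip (fr.ν 0) φ (fun x => χ x - ψ x)|
        ≤ Real.sqrt (ip (fr.ν 0) φ φ) * Real.sqrt (d 0) :=
          abs_ip_le (hφL 0) ((hχL 0).sub (fr.F_memL2 ψ hψF 0))
      _ ≤ Real.sqrt (ip (fr.ν 0) φ φ) * Real.sqrt ρ := by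
          refine mul_le_mul_of_nonneg_left (Real.sqrt_le_sqrt hd0.le) (Real.sqrt_nonneg _)
      _ ≤ K * (ε / (4 * K)) := by
          rw [hsq]
          refine mul_le_mul_of_nonneg_right ?_ (by positivity)
          have := Real.sqrt_nonneg Cφ
          rw [hK]; linarith
      _ = ε / 4 := by field_simp
  rw [Real.dist_eq]
  have habs1 := abs_sub_le (ip (fr.ν m) φ χ) (ip (fr.ν m) φ ψ) (ip (fr.ν 0) φ χ)
  have habs2 := abs_sub_le (ip (fr.ν m) φ ψ) (ip (fr.ν 0) φ ψ) (ip (fr.ν 0) φ χ)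
  linarith

lemma C_combo {φ χ : E → ℝ} (hφ : φ ∈ fr.C) (hχ : χ ∈ fr.C) (c : ℝ) :
    (fun x => φ x + c * χ x) ∈ fr.C := by
  have hcross1 := fr.C_cross hχ hφ
  have hcross2 := fr.C_cross hφ hχ
  obtain ⟨⟨hφm, hφL, hφT⟩, hφ1, hφ2⟩ := hφ
  obtain ⟨⟨hχm, hχL, hχT⟩, hχ1, hχ2⟩ := hχ
  refine ⟨⟨hφm.add (hχm.const_mul c), fun n => memℒp_combo c (hφL n) (hχL n), ?_⟩, ?_, ?_⟩
  · have hexp : ∀ m, ip (fr.ν m) (fun x => φ x + c * χ x) (fun x => φ x + c * χ x)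
        = ip (fr.ν m) φ φ + c * (ip (fr.ν m) χ φ + ip (fr.ν m) φ χ)
          + c ^ 2 * ip (fr.ν m) χ χ := fun m => ip_combo_both c (hφL m) (hχL m)
    simp only [funext hexp, hexp 0]
    exact (hφT.add ((hcross1.add hcross2).const_mul c)).add (hχT.const_mul (c ^ 2))
  · intro n hn
    obtain ⟨gφ, hgφ, heφ⟩ := hφ1 n hn
    obtain ⟨gχ, hgχ, heχ⟩ := hχ1 n hn
    refine ⟨fun x => gφ x + c * gχ x, fr.combo_mem_F hgφ hgχ c, ?_⟩
    filter_upwards [heφ, heχ] with x h1 h2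
    rw [h1, h2]
  · intro ψ hψ
    have hexp : ∀ m, ip (fr.ν m) (fun x => φ x + c * χ x) ψ
        = ip (fr.ν m) φ ψ + c * ip (fr.ν m) χ ψ :=
      fun m => ip_combo_left c (hφL m) (hχL m) (fr.F_memL2 ψ hψ m)
    simp only [funext hexp, hexp 0]
    exact (hφ2 ψ hψ).add ((hχ2 ψ hψ).const_mul c)

lemma WConv_combo {ws vs : ℕ → E → ℝ} {w v : E → ℝ} (c : ℝ)
    (hws : ∀ n, ws n ∈ fr.C) (hvs : ∀ n, vs n ∈ fr.C)
    (hw2 : MemLp w 2 (fr.ν 0)) (hv2 : MemLp v 2 (fr.ν 0))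
    (hw : fr.WConv ws w) (hv : fr.WConv vs v) :
    fr.WConv (fun n x => ws n x + c * vs n x) (fun x => w x + c * v x) := by
  intro ψ hψ
  have hψL : ∀ n, MemLp ψ 2 (fr.ν n) := fun n => fr.C_memℒp hψ n
  have hexp : ∀ n, ip (fr.ν n) (fun x => ws n x + c * vs n x) ψ
      = ip (fr.ν n) (ws n) ψ + c * ip (fr.ν n) (vs n) ψ :=
    fun n => ip_combo_left c (fr.C_memℒp (hws n) n) (fr.C_memℒp (hvs n) n) (hψL n)
  have hexp0 : ip (fr.ν 0) (fun x => w x + c * v x) ψ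
      = ip (fr.ν 0) w ψ + c * ip (fr.ν 0) v ψ := ip_combo_left c hw2 hv2 (hψL 0)
  simp only [funext hexp, hexp0]
  exact (hw ψ hψ).add ((hv ψ hψ).const_mul c)

lemma wconv_bounded {ws : ℕ → E → ℝ} {w : E → ℝ}
    (hws : ∀ n, ws n ∈ fr.C) (hconv : fr.WConv ws w) :
    ∃ B, ∀ n, ip (fr.ν n) (ws n) (ws n) ≤ B := by
  by_contra hcon
  push_neg at hcon
  set b : ℕ → ℝ := fun n => ip (fr.ν n) (ws n) (ws n) with hb
  have hb0 : ∀ n, 0 ≤ b n := fun n => ip_self_nonneg _ _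
  have hinf : ∀ B : ℝ, ∀ N : ℕ, ∃ n, N ≤ n ∧ B < b n := by
    intro B N
    by_contra h
    push_neg at h
    obtain ⟨C, hC⟩ := bdd_of_eventually b B (eventually_atTop.2 ⟨N, fun n hn => h n hn⟩)
    obtain ⟨n, hn⟩ := hcon C
    exact absurd (hC n) (not_le.2 hn)
  choose sel hsel1 hsel2 using fun B N => hinf B N
  set nk : ℕ → ℕ := fun k => Nat.rec (sel 1 1) (fun k ih => sel ((k : ℝ) + 2) (ih + 1)) k
    with hnk
  have hnks : ∀ k, nk (k + 1) = sel ((k : ℝ) + 2) (nk k + 1) := fun k => rfl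
  have hmono : StrictMono nk := by
    refine strictMono_nat_of_lt_succ fun k => ?_
    rw [hnks k]
    exact lt_of_lt_of_le (Nat.lt_succ_self _) (hsel1 _ _)
  have hge1 : ∀ k, 1 ≤ nk k := by
    intro k
    induction k with
    | zero => exact hsel1 1 1
    | succ k ih =>
      rw [hnks k]
      exact le_trans (le_trans ih (Nat.le_succ _)) (hsel1 _ _)
  have hbk : ∀ k : ℕ, (k : ℝ) + 1 < b (nk k) := by
    intro k
    cases k with
    | zero =>
      have := hsel2 1 1
      simp only [Nat.cast_zero, zero_add]
      exact this
    | succ k =>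
      have := hsel2 ((k : ℝ) + 2) (nk k + 1)
      rw [← hnks k] at this
      push_cast
      linarith
  have hbpos : ∀ k : ℕ, 0 < b (nk k) := fun k =>
    lt_of_le_of_lt (by positivity) (hbk k)
  choose g hgF hgae using fun k => (hws (nk k)).2.1 (nk k) (hge1 k)
  set ψ : E → ℝ :=
    fun x => ∑' k, Set.indicator (fr.En (nk k)) (fun y => g k y / b (nk k)) x with hψdef
  have hnot : ∀ k, ∀ x ∈ fr.En (nk k), ∀ j, j ≠ k →
      Set.indicator (fr.En (nk j)) (fun y => g j y / b (nk j)) x = 0 := by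
    intro k x hx j hj
    have hdisj := fr.disjEn (nk j) (nk k) (fun h => hj (hmono.injective h))
    exact Set.indicator_of_notMem (fun hxj => (Set.disjoint_left.1 hdisj hxj) hx) _
  have hψ_on : ∀ k, ∀ x ∈ fr.En (nk k), ψ x = g k x / b (nk k) := by
    intro k x hx
    show (∑' j, Set.indicator (fr.En (nk j)) (fun y => g j y / b (nk j)) x) = _
    rw [tsum_eq_single k (fun j hj => hnot k x hx j hj)]
    exact Set.indicator_of_mem hx _
  have hψ_off : ∀ x, (∀ k, x ∉ fr.En (nk k)) → ψ x = 0 := by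
    intro x hx
    show (∑' j, Set.indicator (fr.En (nk j)) (fun y => g j y / b (nk j)) x) = 0
    have h : (fun k => Set.indicator (fr.En (nk k)) (fun y => g k y / b (nk k)) x)
        = fun _ => (0:ℝ) := funext fun k => Set.indicator_of_notMem (hx k) _
    rw [h, tsum_zero]
  have hψmeas : Measurable ψ := by
    refine measurable_of_tendsto_metrizable
      (f := fun K x => ∑ k ∈ Finset.range K,
        Set.indicator (fr.En (nk k)) (fun y => g k y / b (nk k)) x)
      (fun K => Finset.measurable_sum _ fun k _ =>
        Measurable.indicator ((fr.F_measurable _ (hgF k)).div_const _) (fr.measEn _)) ?_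
    rw [tendsto_pi_nhds]
    intro x
    by_cases hx : ∃ j, x ∈ fr.En (nk j)
    · obtain ⟨j, hj⟩ := hx
      refine tendsto_atTop_of_eventually_const (i₀ := j + 1) fun K hK => ?_
      rw [Finset.sum_eq_single_of_mem j (Finset.mem_range.2 hK)
        (fun i _ hi => hnot j x hj i hi), Set.indicator_of_mem hj, hψ_on j x hj]
    · push_neg at hx
      refine tendsto_atTop_of_eventually_const (i₀ := 0) fun K _ => ?_
      rw [hψ_off x hx]
      exact Finset.sum_eq_zero fun i _ => Set.indicator_of_notMem (hx i) _
  have hmem : ∀ k, ∀ᵐ x ∂fr.ν (nk k), x ∈ fr.En (nk k) :=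
    fun k => mem_ae_iff.2 (fr.nullEn _)
  have hae_rep : ∀ k, ψ =ᵐ[fr.ν (nk k)] fun x => (1 / b (nk k)) * g k x := by
    intro k
    filter_upwards [hmem k] with x hx
    rw [hψ_on k x hx]
    ring
  have hae_zero : ∀ m, (∀ k, nk k ≠ m) → ψ =ᵐ[fr.ν m] fun _ => (0:ℝ) := by
    intro m hm
    have hnull : fr.ν m (⋃ k, fr.En (nk k)) = 0 := by
      refine measure_iUnion_null fun k => ?_
      refine measure_mono_null ?_ (fr.nullEn m)
      intro x hx
      exact fun hxm => (Set.disjoint_left.1 (fr.disjEn (nk k) m (hm k)) hx) hxm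
    have hm2 : ∀ᵐ x ∂fr.ν m, x ∉ ⋃ k, fr.En (nk k) := by
      rw [ae_iff]
      simp only [not_not]
      rw [Set.setOf_mem_eq]
      exact hnull
    filter_upwards [hm2] with x hx
    exact hψ_off x fun k hk => hx (Set.mem_iUnion.2 ⟨k, hk⟩)
  have hgg : ∀ k, ip (fr.ν (nk k)) (g k) (g k) = b (nk k) := by
    intro k
    rw [← ip_congr_left (hgae k), ← ip_congr_right (hgae k)]
  have hrep_mem : ∀ k, MemLp ψ 2 (fr.ν (nk k)) := fun k =>
    MemLp.ae_eq (hae_rep k).symm ((fr.F_memL2 _ (hgF k) _).const_mul _)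
  have hzero_mem : ∀ m, (∀ k, nk k ≠ m) → MemLp ψ 2 (fr.ν m) := fun m hm =>
    MemLp.ae_eq (hae_zero m hm).symm (by simpa using (MemLp.zero (μ := fr.ν m) (p := 2)))
  have hψL : ∀ m, MemLp ψ 2 (fr.ν m) := by
    intro m
    by_cases hm : ∃ k, nk k = m
    · obtain ⟨k, rfl⟩ := hm
      exact hrep_mem k
    · push_neg at hm
      exact hzero_mem m hm
  have hval : ∀ k, ip (fr.ν (nk k)) ψ ψ = 1 / b (nk k) := by
    intro k
    have hbne := (hbpos k).ne'
    rw [ip_congr_left (hae_rep k), ip_congr_right (hae_rep k), ip_const_mul_left,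
      ip_comm, ip_const_mul_left, ip_comm, hgg k]
    field_simp
  have hval0 : ∀ m, (∀ k, nk k ≠ m) → ip (fr.ν m) ψ ψ = 0 := by
    intro m hm
    rw [ip_congr_left (hae_zero m hm)]
    simp [ip]
  have hnk_ne_zero : ∀ k, nk k ≠ 0 := fun k h => by
    have := hge1 k
    omega
  -- convergence of the squared norms of ψ to 0
  have hψsq : Tendsto (fun m => ip (fr.ν m) ψ ψ) atTop (𝓝 0) := by
    refine Metric.tendsto_atTop.2 fun ε hε => ?_
    obtain ⟨J, hJ⟩ := exists_nat_one_div_lt hε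
    refine ⟨nk J + 1, fun m hm => ?_⟩
    rw [Real.dist_eq, sub_zero]
    by_cases hmm : ∃ k, nk k = m
    · obtain ⟨k, rfl⟩ := hmm
      rw [hval k, abs_of_nonneg (by have := hbpos k; positivity)]
      have hkJ : J < k := by
        have : nk J < nk k := by omega
        exact hmono.lt_iff_lt.1 this
      have h1 : ((J:ℝ) + 1) ≤ (k:ℝ) + 1 := by
        have : (J:ℝ) ≤ (k:ℝ) := Nat.cast_le.2 hkJ.le
        linarith
      have h2 : (0:ℝ) < (J:ℝ) + 1 := by positivity
      calc 1 / b (nk k) ≤ 1 / ((k:ℝ) + 1) := by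
            refine one_div_le_one_div_of_le (by positivity) (hbk k).le
        _ ≤ 1 / ((J:ℝ) + 1) := one_div_le_one_div_of_le h2 h1
        _ < ε := hJ
    · push_neg at hmm
      rw [hval0 m hmm]
      simpa using hε
  have hψC : ψ ∈ fr.C := by
    refine ⟨⟨hψmeas, hψL, ?_⟩, ?_, ?_⟩
    · rw [hval0 0 hnk_ne_zero]
      exact hψsq
    · intro n hn
      by_cases hm : ∃ k, nk k = n
      · obtain ⟨k, rfl⟩ := hm
        exact ⟨fun x => (1 / b (nk k)) * g k x, fr.smul_mem_F (hgF k) _, hae_rep k⟩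
      · push_neg at hm
        exact ⟨fun _ => 0, fr.zero_mem_F, hae_zero n hm⟩
    · intro χ hχ
      have h0 : ip (fr.ν 0) ψ χ = 0 := by
        rw [ip_congr_left (hae_zero 0 hnk_ne_zero)]
        simp [ip]
      rw [h0]
      refine squeeze_zero_norm
        (a := fun m => Real.sqrt (ip (fr.ν m) ψ ψ) * Real.sqrt (ip (fr.ν m) χ χ))
        (fun m => ?_) ?_
      · exact le_trans (le_of_eq (Real.norm_eq_abs _))
          (abs_ip_le (hψL m) (fr.F_memL2 χ hχ m))
      · have h1 : Tendsto (fun m => Real.sqrt (ip (fr.ν m) ψ ψ)) atTop (𝓝 0) := by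
          simpa using hψsq.sqrt
        have h2 : Tendsto (fun m => Real.sqrt (ip (fr.ν m) χ χ)) atTop
            (𝓝 (Real.sqrt (ip (fr.ν 0) χ χ))) := (fr.F_tendsto χ hχ).sqrt
        simpa using h1.mul h2
  -- contradiction with w-convergence
  have hT := (hconv ψ hψC).comp hmono.tendsto_atTop
  have h0 : ip (fr.ν 0) w ψ = 0 := by
    rw [ip_congr_right (hae_zero 0 hnk_ne_zero)]
    simp [ip]
  have hone : ∀ k, ip (fr.ν (nk k)) (ws (nk k)) ψ = 1 := by
    intro k
    have hbne := (hbpos k).ne'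
    rw [ip_congr_right (hae_rep k), ip_comm, ip_const_mul_left, ip_comm,
      ← ip_congr_right (hgae k)]
    have hx : ip (fr.ν (nk k)) (ws (nk k)) (ws (nk k)) = b (nk k) := rfl
    rw [hx]
    field_simp
  have : (1:ℝ) = 0 := by
    refine tendsto_nhds_unique ?_ (h0 ▸ hT)
    rw [show ((fun n => ip (fr.ν n) (ws n) ψ) ∘ nk) = fun _ => (1:ℝ) from funext fun k => hone k]
    exact tendsto_const_nhds
  norm_num at this

end Frame
set_option maxHeartbeats 1000000 in
/-- Lemma 2.5 (a): if the forms `S n` pre-converge to `S`, `ws n ∈ D(S n) ∩ 𝓒`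
`w`-converges to `w ∈ L²(E, ν)` with `sup_n ⟨Aₙ wₙ, Aₙ wₙ⟩ₙ < ∞`, and
`vs n ∈ D(S n) ∩ 𝓒` `s`-converges to `v ∈ D(S)` in the sense of condition (ii) of
pre-convergence, then `w ∈ D(S)` and
`Sₙ(vₙ, wₙ) + Sₙ(wₙ, vₙ) → S(v, w) + S(w, v)`. -/
theorem lemma25a (fr : Frame E) (sg : ∀ n, Semigroup2 (fr.ν n))
    (hcontr : ∀ n, (sg n).IsContraction)
    (hpre : PreConv fr sg)
    (w : E → ℝ) (hwm : Measurable w) (hw2 : MemLp w 2 (fr.ν 0))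
    (ws : ℕ → E → ℝ) (hws : ∀ n, ws n ∈ fr.C ∧ (sg n).memD (ws n))
    (hwconv : fr.WConv ws w)
    (hwA : ∃ M : ℝ, ∀ n, ip (fr.ν n) ((sg n).Af (ws n)) ((sg n).Af (ws n)) ≤ M)
    (v : E → ℝ) (hvm : Measurable v) (hv2 : MemLp v 2 (fr.ν 0)) (hvD : (sg 0).memD v)
    (vs : ℕ → E → ℝ) (hvs : ∀ n, vs n ∈ fr.C ∧ (sg n).memD (vs n))
    (hvconv : fr.SConv vs v)
    (hvA : ∃ M : ℝ, ∀ n, ip (fr.ν n) ((sg n).Af (vs n)) ((sg n).Af (vs n)) ≤ M)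
    (hvS : limsup (fun n => (sg n).S (vs n) (vs n)) atTop ≤ (sg 0).S v v) :
    (sg 0).memD w ∧
    Tendsto (fun n => (sg n).S (vs n) (ws n) + (sg n).S (ws n) (vs n)) atTop
      (𝓝 ((sg 0).S v w + (sg 0).S w v)) := by
  classical
  -- basic membership facts
  have hws2 : ∀ n, MemLp (ws n) 2 (fr.ν n) := fun n => fr.C_memℒp (hws n).1 n
  have hvs2 : ∀ n, MemLp (vs n) 2 (fr.ν n) := fun n => fr.C_memℒp (hvs n).1 n
  -- `w ∈ D(S)`
  have hw_main := hpre.1 w hwm hw2 id strictMono_id ws hws hwconv hwA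
  have hwD : (sg 0).memD w := hw_main.1
  -- notation
  set a : ℕ → ℝ := fun n => (sg n).S (vs n) (ws n) + (sg n).S (ws n) (vs n) with ha
  set f : ℕ → ℝ := fun n => (sg n).S (ws n) (ws n) with hf
  set e : ℕ → ℝ := fun n => (sg n).S (vs n) (vs n) with he
  set A : ℝ := (sg 0).S v w + (sg 0).S w v with hA
  set f0 : ℝ := (sg 0).S w w with hf0
  set e0 : ℝ := (sg 0).S v v with he0
  -- bounds on generators and norms
  obtain ⟨Mw, hMw⟩ := hwA
  obtain ⟨Mv, hMv⟩ := hvA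
  have hGw : ∀ n, ‖(sg n).gen (toL2 (fr.ν n) (ws n))‖ ≤ Real.sqrt Mw := by
    intro n
    rw [← Real.sqrt_sq (norm_nonneg _)]
    exact Real.sqrt_le_sqrt (le_trans (le_of_eq (Semigroup2.ip_Af_self (sg n) (ws n)).symm)
      (hMw n))
  have hGv : ∀ n, ‖(sg n).gen (toL2 (fr.ν n) (vs n))‖ ≤ Real.sqrt Mv := by
    intro n
    rw [← Real.sqrt_sq (norm_nonneg _)]
    exact Real.sqrt_le_sqrt (le_trans (le_of_eq (Semigroup2.ip_Af_self (sg n) (vs n)).symm)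
      (hMv n))
  obtain ⟨Bw, hBw⟩ := fr.wconv_bounded (fun n => (hws n).1) hwconv
  obtain ⟨Bv, hBv⟩ := bdd_of_tendsto _ _ hvconv.2
  have hNw : ∀ n, ‖toL2 (fr.ν n) (ws n)‖ ≤ Real.sqrt Bw := by
    intro n
    rw [norm_toL2_eq_sqrt (hws2 n)]
    exact Real.sqrt_le_sqrt (hBw n)
  have hNv : ∀ n, ‖toL2 (fr.ν n) (vs n)‖ ≤ Real.sqrt Bv := by
    intro n
    rw [norm_toL2_eq_sqrt (hvs2 n)]
    exact Real.sqrt_le_sqrt (hBv n)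
  have hsqMw : (0:ℝ) ≤ Real.sqrt Mw := Real.sqrt_nonneg _
  have hsqBw : (0:ℝ) ≤ Real.sqrt Bw := Real.sqrt_nonneg _
  have hsqMv : (0:ℝ) ≤ Real.sqrt Mv := Real.sqrt_nonneg _
  have hsqBv : (0:ℝ) ≤ Real.sqrt Bv := Real.sqrt_nonneg _
  set Cf : ℝ := Real.sqrt Mw * Real.sqrt Bw with hCf
  set Ce : ℝ := Real.sqrt Mv * Real.sqrt Bv with hCe
  have hfb : ∀ n, f n ≤ Cf := by
    intro n
    refine le_trans (le_abs_self _) (le_trans (Semigroup2.abs_S_le (hws2 n)) ?_)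
    exact mul_le_mul (hGw n) (hNw n) (norm_nonneg _) hsqMw
  have heb : ∀ n, e n ≤ Ce := by
    intro n
    refine le_trans (le_abs_self _) (le_trans (Semigroup2.abs_S_le (hvs2 n)) ?_)
    exact mul_le_mul (hGv n) (hNv n) (norm_nonneg _) hsqMv
  -- the key liminf inequality, for every parameter `s`
  have hexp : ∀ s : ℝ, ∀ n, (sg n).S (fun x => ws n x + s * vs n x)
      (fun x => ws n x + s * vs n x) = f n + s * a n + s ^ 2 * e n :=
    fun s n => Semigroup2.S_combo_expand (hws n).2 (hvs n).2 (hws2 n) (hvs2 n) s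
  have hexp0 : ∀ s : ℝ, (sg 0).S (fun x => w x + s * v x) (fun x => w x + s * v x)
      = f0 + s * A + s ^ 2 * e0 :=
    fun s => Semigroup2.S_combo_expand hwD hvD hw2 hv2 s
  have hker : ∀ s : ℝ, f0 + s * A + s ^ 2 * e0 ≤
      liminf (fun n => f n + s * a n + s ^ 2 * e n) atTop := by
    intro s
    have hmemb : ∀ k, (fun x => ws k x + s * vs k x) ∈ fr.C ∧
        (sg k).memD (fun x => ws k x + s * vs k x) := fun k =>
      ⟨fr.C_combo (hws k).1 (hvs k).1 s,
        Semigroup2.memD_combo (hws k).2 (hvs k).2 (hws2 k) (hvs2 k) s⟩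
    have hwc : fr.WConv (fun n x => ws n x + s * vs n x) (fun x => w x + s * v x) :=
      fr.WConv_combo s (fun n => (hws n).1) (fun n => (hvs n).1) hw2 hv2 hwconv hvconv.1
    have hbound : ∀ k, ip (fr.ν k) ((sg k).Af (fun x => ws k x + s * vs k x))
        ((sg k).Af (fun x => ws k x + s * vs k x))
        ≤ (Real.sqrt Mw + |s| * Real.sqrt Mv) ^ 2 := by
      intro k
      rw [Semigroup2.ip_Af_self, toL2_combo s (hws2 k) (hvs2 k),
        Semigroup2.gen_combo (hws k).2 (hvs k).2 s]
      refine pow_le_pow_left₀ (norm_nonneg _) ?_ 2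
      refine le_trans (norm_add_le _ _) ?_
      rw [norm_smul, Real.norm_eq_abs]
      exact add_le_add (hGw k) (mul_le_mul_of_nonneg_left (hGv k) (abs_nonneg s))
    have h := hpre.1 (fun x => w x + s * v x) (hwm.add (hvm.const_mul s))
      (memℒp_combo s hw2 hv2) id strictMono_id (fun n x => ws n x + s * vs n x)
      hmemb hwc ⟨(Real.sqrt Mw + |s| * Real.sqrt Mv) ^ 2, hbound⟩
    have h2 := h.2
    rw [hexp0 s] at h2
    exact le_trans h2 (le_of_eq (liminf_congr (Eventually.of_forall fun n => hexp s n)))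
  have hcombo_nonneg : ∀ s : ℝ, ∀ n, 0 ≤ f n + s * a n + s ^ 2 * e n := by
    intro s n
    rw [← hexp s n]
    exact Semigroup2.S_nonneg (hcontr n)
      (Semigroup2.memD_combo (hws n).2 (hvs n).2 (hws2 n) (hvs2 n) s)
      (memℒp_combo s (hws2 n) (hvs2 n))
  clear_value a f e A f0 e0 Cf Ce
  refine ⟨hwD, ?_⟩
  -- the ε-argument
  refine Metric.tendsto_atTop.2 fun δ hδ => ?_
  obtain ⟨K', hK'0, e4⟩ : ∃ K' : ℝ, 0 ≤ K' ∧ Cf - f0 ≤ K' :=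
    ⟨max (Cf - f0) 0, le_max_right _ _, le_max_left _ _⟩
  obtain ⟨s, hs, hK's⟩ : ∃ s : ℝ, 0 < s ∧ K' ≤ δ * s / 2 := by
    refine ⟨2 * (K' + 1) / δ, by positivity, ?_⟩
    have h : δ * (2 * (K' + 1) / δ) / 2 = K' + 1 := by field_simp
    linarith
  obtain ⟨η, hη, hη2⟩ : ∃ η : ℝ, 0 < η ∧ η + η * s ^ 2 = δ * s / 4 := by
    refine ⟨δ * s / (4 * (1 + s ^ 2)), by positivity, ?_⟩
    field_simp
  -- eventual bounds from the two liminf inequalities and the limsup hypothesis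
  have hbdd1 : IsBoundedUnder (· ≥ ·) atTop (fun n => f n + s * a n + s ^ 2 * e n) :=
    isBoundedUnder_of ⟨0, fun n => hcombo_nonneg s n⟩
  have hbdd1' : IsBoundedUnder (· ≥ ·) atTop (fun n => f n + (-s) * a n + (-s) ^ 2 * e n) :=
    isBoundedUnder_of ⟨0, fun n => hcombo_nonneg (-s) n⟩
  have hbdde : IsBoundedUnder (· ≤ ·) atTop e := isBoundedUnder_of ⟨Ce, heb⟩
  have hev1 : ∀ᶠ n in atTop, f0 + s * A + s ^ 2 * e0 - η < f n + s * a n + s ^ 2 * e n :=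
    eventually_lt_of_lt_liminf (lt_of_lt_of_le (by linarith) (hker s)) hbdd1
  have hev1' : ∀ᶠ n in atTop,
      f0 + (-s) * A + (-s) ^ 2 * e0 - η < f n + (-s) * a n + (-s) ^ 2 * e n :=
    eventually_lt_of_lt_liminf (lt_of_lt_of_le (by linarith) (hker (-s))) hbdd1'
  have hev2 : ∀ᶠ n in atTop, e n < e0 + η := by
    refine eventually_lt_of_limsup_lt ?_ hbdde
    exact lt_of_le_of_lt hvS (by linarith)
  obtain ⟨N, hN⟩ := eventually_atTop.1 ((hev1.and hev1').and hev2)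
  refine ⟨N, fun n hn => ?_⟩
  obtain ⟨⟨h1, h1'⟩, h2⟩ := hN n hn
  have hsq : (0:ℝ) ≤ s ^ 2 := sq_nonneg s
  have m2 : s ^ 2 * e n ≤ s ^ 2 * (e0 + η) := mul_le_mul_of_nonneg_left h2.le hsq
  rw [mul_add] at m2
  have e3 : f n ≤ Cf := hfb n
  simp only [neg_sq, neg_mul] at h1'
  have hδs : 0 < δ * s := mul_pos hδ hs
  have step1 : s * A - s * a n < K' + δ * s / 4 := by linarith
  have step2 : s * a n - s * A < K' + δ * s / 4 := by linarith
  have hd1 : A - a n < δ := by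
    have h5 : s * (A - a n) < s * δ := by rw [mul_sub]; linarith
    exact (mul_lt_mul_iff_right₀ hs).1 h5
  have hd2 : a n - A < δ := by
    have h5 : s * (a n - A) < s * δ := by rw [mul_sub]; linarith
    exact (mul_lt_mul_iff_right₀ hs).1 h5
  rw [Real.dist_eq, abs_sub_lt_iff]
  exact ⟨hd2, hd1⟩

end Mosco
end
end
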